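/- The difference equation A(x) P_n(x+1) + B(x) P_n(x-1) + C(x) P_n(x) = n[(N-x) P_n(x+1) + (x-N-α-1) P_n(x)] holds as an identity of polynomials in x, where A(x) = (N-x)(x-β+1), B(x) = x(α+β+N+1-x), C(x) = -(A(x)+B(x)). -/
import Mathlib

noncomputable def poch (a : ℝ) (n : ℕ) : ℝ := ∏ i ∈ Finset.range n, (a + i)

/-- The R_I polynomial of Hahn type P_n(x; α, β, N). -/
noncomputable def P (α β : ℝ) (N n : ℕ) (x : ℝ) : ℝ :=
  ∑ k ∈ Finset.range (n + 1),
    poch (-(n : ℝ)) k * poch (α + 1) k /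
      ((Nat.factorial k : ℝ) * poch (-(N : ℝ)) k * poch (1 - β - n) k) * poch (-x) k

lemma poch_zero (a : ℝ) : poch a 0 = 1 := by simp [poch]

lemma poch_succ (a : ℝ) (k : ℕ) : poch a (k + 1) = poch a k * (a + k) := by
  simp [poch, Finset.prod_range_succ]

lemma poch_succ' (a : ℝ) (k : ℕ) : poch a (k + 1) = a * poch (a + 1) k := by
  rw [poch, Finset.prod_range_succ']
  simp only [Nat.cast_zero, add_zero]
  rw [mul_comm]
  unfold poch
  congr 1
  apply Finset.prod_congr rfl
  intro i _
  push_cast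
  ring

lemma key (α β : ℝ) (N n : ℕ) (x : ℝ) (j : ℕ) :
    ((N:ℝ) - x) * (x - β + 1 - n) * poch (-(x+1)) (j+1)
      + x * (α + β + (N:ℝ) + 1 - x) * poch (-(x-1)) (j+1)
      + (-(((N:ℝ) - x) * (x - β + 1) + x * (α + β + N + 1 - x)) - n * (x - N - α - 1)) * poch (-x) (j+1)
    = ((n:ℝ) - ((j:ℝ)+1)) * (α + 1 + ((j:ℝ)+1)) * poch (-x) (j+1)
      - ((j:ℝ)+1) * ((N:ℝ) - j) * ((j:ℝ) + 1 - β - n) * poch (-x) j := by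
  have e1 : poch (-(x+1)) (j+1) = (-x-1) * poch (-x) j := by
    rw [show -(x+1) = (-x-1) by ring, poch_succ', show (-x-1)+1 = -x by ring]
  have e2 : x * poch (-(x-1)) (j+1) = (x - j) * (1 - x + j) * poch (-x) j := by
    have a1 : poch (-x) (j+1) = (-x) * poch (-(x-1)) j := by
      rw [poch_succ', show -x + 1 = -(x-1) by ring]
    have a2 := poch_succ (-x) j
    have b := poch_succ (-(x-1)) j
    rw [b]
    linear_combination (1 - x + (j:ℝ)) * a1 - (1 - x + (j:ℝ)) * a2
  have e3 := poch_succ (-x) j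
  linear_combination (((N:ℝ)-x)*(x-β+1-(n:ℝ))) * e1 + (α+β+(N:ℝ)+1-x) * e2
    + ((-(((N:ℝ)-x)*(x-β+1) + x*(α+β+(N:ℝ)+1-x)) - (n:ℝ)*(x-(N:ℝ)-α-1))
        - ((n:ℝ)-((j:ℝ)+1))*(α+1+((j:ℝ)+1))) * e3

noncomputable def c (α β : ℝ) (N n k : ℕ) : ℝ :=
  poch (-(n : ℝ)) k * poch (α + 1) k /
    ((Nat.factorial k : ℝ) * poch (-(N : ℝ)) k * poch (1 - β - n) k)

lemma cstep (α β : ℝ) (N n k : ℕ)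
    (h1 : poch (-(N:ℝ)) k ≠ 0) (h1' : poch (-(N:ℝ)) (k+1) ≠ 0)
    (h2 : poch (1-β-(n:ℝ)) k ≠ 0) (h2' : poch (1-β-(n:ℝ)) (k+1) ≠ 0) :
    c α β N n (k+1) * (((k:ℝ)+1) * ((N:ℝ)-k) * ((k:ℝ)+1-β-n))
      = c α β N n k * (((n:ℝ)-k) * (α+1+k)) := by
  have hf : (Nat.factorial k : ℝ) ≠ 0 := Nat.cast_ne_zero.2 k.factorial_ne_zero
  rw [poch_succ] at h1' h2'
  have hN1 : (-(N:ℝ) + k) ≠ 0 := right_ne_zero_of_mul h1'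
  have hβ1 : (1-β-(n:ℝ) + k) ≠ 0 := right_ne_zero_of_mul h2'
  unfold c
  rw [poch_succ (-(n:ℝ)), poch_succ (α+1), poch_succ (-(N:ℝ)), poch_succ (1-β-(n:ℝ)),
    Nat.factorial_succ]
  push_cast
  field_simp
  ring

noncomputable def g (α β : ℝ) (N n : ℕ) (x : ℝ) (k : ℕ) : ℝ :=
  c α β N n k * (((n:ℝ) - (k:ℝ)) * (α + 1 + (k:ℝ))) * poch (-x) k

theorem stmt16 (N n : ℕ) (α β : ℝ) (hn : n ≤ N)
    (hβ : ∀ k ≤ n, poch (1 - β - n) k ≠ 0)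
    (hN : ∀ k ≤ n, poch (-(N : ℝ)) k ≠ 0) :
    ∀ x : ℝ,
      ((N : ℝ) - x) * (x - β + 1) * P α β N n (x + 1)
        + x * (α + β + N + 1 - x) * P α β N n (x - 1)
        + (-(((N : ℝ) - x) * (x - β + 1) + x * (α + β + N + 1 - x))) * P α β N n x
      = (n : ℝ) * (((N : ℝ) - x) * P α β N n (x + 1) + (x - N - α - 1) * P α β N n x) := by
  intro x
  have expand : ∀ y : ℝ, P α β N n y = ∑ k ∈ Finset.range (n+1), c α β N n k * poch (-y) k := by
    intro y; rfl
  have main : ∑ k ∈ Finset.range (n+1),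
      c α β N n k * (((N:ℝ)-x)*(x-β+1-(n:ℝ)) * poch (-(x+1)) k
        + x*(α+β+(N:ℝ)+1-x) * poch (-(x-1)) k
        + (-(((N:ℝ)-x)*(x-β+1) + x*(α+β+(N:ℝ)+1-x)) - (n:ℝ)*(x-(N:ℝ)-α-1)) * poch (-x) k)
      = 0 := by
    rw [Finset.sum_range_succ']
    have step : ∀ j ∈ Finset.range n,
        c α β N n (j+1) * (((N:ℝ)-x)*(x-β+1-(n:ℝ)) * poch (-(x+1)) (j+1)
          + x*(α+β+(N:ℝ)+1-x) * poch (-(x-1)) (j+1)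
          + (-(((N:ℝ)-x)*(x-β+1) + x*(α+β+(N:ℝ)+1-x)) - (n:ℝ)*(x-(N:ℝ)-α-1)) * poch (-x) (j+1))
        = g α β N n x (j+1) - g α β N n x j := by
      intro j hj
      have hj' : j + 1 ≤ n := Finset.mem_range.1 hj
      have hk := key α β N n x j
      have hc := cstep α β N n j (hN j (le_of_lt (Nat.lt_of_succ_le hj'))) (hN (j+1) hj')
        (hβ j (le_of_lt (Nat.lt_of_succ_le hj'))) (hβ (j+1) hj')
      unfold g
      push_cast
      linear_combination (c α β N n (j+1)) * hk - (poch (-x) j) * hc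
    rw [Finset.sum_congr rfl step, Finset.sum_range_sub (g α β N n x)]
    simp only [g, c, poch_zero, Nat.cast_zero, Nat.factorial_zero, Nat.cast_one]
    ring
  rw [expand (x+1), expand (x-1), expand x, ← sub_eq_zero, ← main]
  simp only [mul_add, Finset.mul_sum, ← Finset.sum_add_distrib, ← Finset.sum_sub_distrib]
  apply Finset.sum_congr rfl
  intro k _
  ring
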